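/- Let n ≥ 1 and equip ℝⁿ with its standard inner product ⟨·,·⟩. For ξ ∈ (ℝⁿ)* let ξ♯ ∈ ℝⁿ denote the vector with ⟨ξ♯, w⟩ = ξ(w) for all w. Then the map sending ξ ∈ (ℝⁿ)* to the symmetric bilinear map T_ξ : ℝⁿ × ℝⁿ → ℝⁿ, T_ξ(u,v) = ξ(u)·v + ξ(v)·u − ⟨u,v⟩·ξ♯, is a linear isomorphism from (ℝⁿ)* onto the first Singer–Sternberg prolongation co(n)^{(1)} of co(n); in particular dim co(n)^{(1)} = n. -/

import Mathlib

/-- The conformal Lie algebra `co(n) = {A ∈ gl(n,ℝ) : A + Aᵀ = c • I for some c ∈ ℝ}`. -/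
def co (n : ℕ) : Set (Matrix (Fin n) (Fin n) ℝ) :=
  {A | ∃ c : ℝ, A + A.transpose = c • (1 : Matrix (Fin n) (Fin n) ℝ)}

/-- The first Singer–Sternberg prolongation `co(n)^{(1)}` of `co(n)`, as a subspace of the
space of bilinear maps `ℝⁿ × ℝⁿ → ℝⁿ`: symmetric bilinear maps `T` such that for each
`u ∈ ℝⁿ` the endomorphism `v ↦ T(u,v)` lies in `co(n)`. -/
noncomputable def coProl1 (n : ℕ) :
    Submodule ℝ (MultilinearMap ℝ (fun _ : Fin 2 => (Fin n → ℝ)) (Fin n → ℝ)) where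
  carrier := {T |
    (∀ (σ : Equiv.Perm (Fin 2)) (v : Fin 2 → Fin n → ℝ), (T fun i => v (σ i)) = T v) ∧
    ∀ u : Fin n → ℝ, ∃ M ∈ co n, ∀ v : Fin n → ℝ, M.mulVec v = T ![u, v]}
  add_mem' := by
    rintro T T' ⟨hs, hc⟩ ⟨hs', hc'⟩
    refine ⟨fun σ v => ?_, fun u => ?_⟩
    · simp [hs σ v, hs' σ v]
    · obtain ⟨M, ⟨c, hM⟩, h⟩ := hc u
      obtain ⟨M', ⟨c', hM'⟩, h'⟩ := hc' u
      refine ⟨M + M', ⟨c + c', ?_⟩, fun v => ?_⟩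
      · rw [Matrix.transpose_add, add_smul, ← hM, ← hM']
        abel
      · simp [Matrix.add_mulVec, h v, h' v]
  zero_mem' := by
    refine ⟨fun σ v => rfl, fun u => ⟨0, ⟨0, by simp⟩, fun v => by simp⟩⟩
  smul_mem' := by
    rintro a T ⟨hs, hc⟩
    refine ⟨fun σ v => ?_, fun u => ?_⟩
    · simp [hs σ v]
    · obtain ⟨M, ⟨c, hM⟩, h⟩ := hc u
      refine ⟨a • M, ⟨a * c, ?_⟩, fun v => ?_⟩
      · rw [Matrix.transpose_smul, ← smul_add, hM, smul_smul]
      · simp [Matrix.smul_mulVec, h v]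


section Aux

variable {n : ℕ}

lemma upd0 (a b x : Fin n → ℝ) : Function.update ![a,b] 0 x = ![x,b] := by
  funext i; fin_cases i <;> simp [Function.update]

lemma perm2 (σ : Equiv.Perm (Fin 2)) : (σ 0 = 0 ∧ σ 1 = 1) ∨ (σ 0 = 1 ∧ σ 1 = 0) := by
  revert σ; decide

lemma sum_single (ξ : (Fin n → ℝ) →ₗ[ℝ] ℝ) (v : Fin n → ℝ) :
    ∑ j, v j * ξ (Pi.single j 1) = ξ v := by
  have h : v = ∑ j, v j • (Pi.single j 1 : Fin n → ℝ) := by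
    funext k
    simp [Pi.single_apply, Finset.sum_ite_eq']
  conv_rhs => rw [h]
  simp [smul_eq_mul, mul_comm]

end Aux

noncomputable def Tmap (n : ℕ) (ξ : (Fin n → ℝ) →ₗ[ℝ] ℝ) :
    MultilinearMap ℝ (fun _ : Fin 2 => (Fin n → ℝ)) (Fin n → ℝ) where
  toFun m := ξ (m 0) • m 1 + ξ (m 1) • m 0 -
      (∑ i, m 0 i * m 1 i) • (fun j => ξ (Pi.single j 1))
  map_update_add' m i x y := by
    have hi : i = 0 ∨ i = 1 := by omega
    rcases hi with rfl | rfl <;>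
    · funext k
      simp only [Function.update_self, ne_eq, Fin.isValue,
        Function.update_of_ne (show (1:Fin 2) ≠ 0 by norm_num),
        Function.update_of_ne (show (0:Fin 2) ≠ 1 by norm_num),
        map_add, Pi.add_apply, Pi.smul_apply, Pi.sub_apply, smul_eq_mul]
      simp only [add_mul, mul_add, Finset.sum_add_distrib]
      ring
  map_update_smul' m i c x := by
    have hi : i = 0 ∨ i = 1 := by omega
    rcases hi with rfl | rfl <;>
    · funext k
      simp only [Function.update_self, ne_eq, Fin.isValue,
        Function.update_of_ne (show (1:Fin 2) ≠ 0 by norm_num),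
        Function.update_of_ne (show (0:Fin 2) ≠ 1 by norm_num),
        map_smul, Pi.smul_apply, Pi.add_apply, Pi.sub_apply, smul_eq_mul]
      simp only [mul_assoc, mul_comm, mul_left_comm, ← Finset.mul_sum]
      ring

lemma Tmap_symm (n : ℕ) (ξ : (Fin n → ℝ) →ₗ[ℝ] ℝ) (σ : Equiv.Perm (Fin 2))
    (v : Fin 2 → Fin n → ℝ) : (Tmap n ξ fun i => v (σ i)) = Tmap n ξ v := by
  rcases perm2 σ with ⟨h0, h1⟩ | ⟨h0, h1⟩
  · show ξ (v (σ 0)) • v (σ 1) + ξ (v (σ 1)) • v (σ 0) -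
        (∑ i, v (σ 0) i * v (σ 1) i) • (fun j => ξ (Pi.single j 1)) = _
    rw [h0, h1]
    rfl
  · show ξ (v (σ 0)) • v (σ 1) + ξ (v (σ 1)) • v (σ 0) -
        (∑ i, v (σ 0) i * v (σ 1) i) • (fun j => ξ (Pi.single j 1)) = _
    rw [h0, h1]
    show _ = ξ (v 0) • v 1 + ξ (v 1) • v 0 - (∑ i, v 0 i * v 1 i) • _
    rw [Finset.sum_congr rfl (fun i _ => mul_comm (v 1 i) (v 0 i))]
    abel

lemma Tmap_co (n : ℕ) (ξ : (Fin n → ℝ) →ₗ[ℝ] ℝ) (u : Fin n → ℝ) :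
    ∃ M ∈ co n, ∀ v : Fin n → ℝ, M.mulVec v = Tmap n ξ ![u, v] := by
  refine ⟨ξ u • 1 + Matrix.of (fun i j => u i * ξ (Pi.single j 1) - ξ (Pi.single i 1) * u j),
    ⟨2 * ξ u, ?_⟩, fun v => ?_⟩
  · ext i j
    simp [Matrix.transpose_apply, Matrix.one_apply]
    split_ifs <;> ring
  · funext i
    simp only [Matrix.mulVec, dotProduct, Matrix.add_apply, Matrix.smul_apply,
      Matrix.one_apply, Matrix.of_apply, smul_eq_mul, Tmap, MultilinearMap.coe_mk,
      Matrix.cons_val_zero, Matrix.cons_val_one, Matrix.head_cons, Pi.add_apply, Pi.sub_apply,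
      Pi.smul_apply]
    have : ∀ j, (ξ u * (if i = j then (1:ℝ) else 0) + (u i * ξ (Pi.single j 1) - ξ (Pi.single i 1) * u j)) * v j
        = (if i = j then ξ u * v j else 0) + (u i * (v j * ξ (Pi.single j 1)) - ξ (Pi.single i 1) * (u j * v j)) := by
      intro j; split_ifs <;> ring
    rw [Finset.sum_congr rfl (fun j _ => this j)]
    rw [Finset.sum_add_distrib, Finset.sum_sub_distrib, ← Finset.mul_sum, ← Finset.mul_sum,
      sum_single]
    simp only [Finset.sum_ite_eq, Finset.mem_univ, if_true, smul_eq_mul]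
    ring

section Recon
variable {n : ℕ} {T : MultilinearMap ℝ (fun _ : Fin 2 => (Fin n → ℝ)) (Fin n → ℝ)}

lemma Lswap (hsym : ∀ (σ : Equiv.Perm (Fin 2)) (v : Fin 2 → Fin n → ℝ),
      (T fun i => v (σ i)) = T v) (a b : Fin n → ℝ) : T ![a, b] = T ![b, a] := by
  have h := hsym (Equiv.swap 0 1) ![a, b]
  have hv : (fun i => ![a,b] (Equiv.swap (0:Fin 2) 1 i)) = ![b,a] := by
    funext i
    rcases (by omega : i = 0 ∨ i = 1) with rfl | rfl <;> simp
  rw [hv] at h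
  exact h.symm

lemma Lcell (u : Fin n → ℝ) (M : Matrix (Fin n) (Fin n) ℝ)
    (h : ∀ v : Fin n → ℝ, M.mulVec v = T ![u, v]) (i j : Fin n) :
    T ![u, Pi.single j 1] i = M i j := by
  rw [← h]
  simp [Matrix.mulVec, dotProduct, Pi.single_apply, mul_ite, Finset.sum_ite_eq]

lemma Lconf (hco : ∀ u : Fin n → ℝ, ∃ M ∈ co n, ∀ v : Fin n → ℝ, M.mulVec v = T ![u, v])
    (u : Fin n → ℝ) :
    ∃ c : ℝ, ∀ i j, T ![u, Pi.single j 1] i + T ![u, Pi.single i 1] j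
      = if i = j then c else 0 := by
  obtain ⟨M, ⟨c, hM⟩, h⟩ := hco u
  refine ⟨c, fun i j => ?_⟩
  rw [Lcell u M h i j, Lcell u M h j i]
  have := congrFun (congrFun hM i) j
  simpa [Matrix.one_apply, mul_ite] using this

lemma Ldiag (hco : ∀ u : Fin n → ℝ, ∃ M ∈ co n, ∀ v : Fin n → ℝ, M.mulVec v = T ![u, v])
    (u : Fin n → ℝ) (i j : Fin n) :
    T ![u, Pi.single i 1] i = T ![u, Pi.single j 1] j := by
  obtain ⟨c, hc⟩ := Lconf hco u
  have h1 := hc i i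
  have h2 := hc j j
  simp at h1 h2
  linarith

lemma Lanti (hco : ∀ u : Fin n → ℝ, ∃ M ∈ co n, ∀ v : Fin n → ℝ, M.mulVec v = T ![u, v])
    (u : Fin n → ℝ) {i j : Fin n} (hij : i ≠ j) :
    T ![u, Pi.single j 1] i = - T ![u, Pi.single i 1] j := by
  obtain ⟨c, hc⟩ := Lconf hco u
  have h := hc i j
  rw [if_neg hij] at h
  linarith

lemma Lbasis (hsym : ∀ (σ : Equiv.Perm (Fin 2)) (v : Fin 2 → Fin n → ℝ),
      (T fun i => v (σ i)) = T v)
    (hco : ∀ u : Fin n → ℝ, ∃ M ∈ co n, ∀ v : Fin n → ℝ, M.mulVec v = T ![u, v])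
    (ξ : (Fin n → ℝ) →ₗ[ℝ] ℝ)
    (hξ : ∀ (u : Fin n → ℝ) (i : Fin n), T ![u, Pi.single i 1] i = ξ u)
    (a b i : Fin n) :
    T ![Pi.single a 1, Pi.single b 1] i =
      (if b = i then ξ (Pi.single a 1) else 0) +
      (if a = i then ξ (Pi.single b 1) else 0) -
      (if a = b then ξ (Pi.single i 1) else 0) := by
  by_cases hab : a = b
  · subst hab
    by_cases hai : a = i
    · subst hai
      simp [hξ]
    · have hia : i ≠ a := fun h => hai h.symm
      have h1 : T ![Pi.single a 1, Pi.single a 1] i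
          = - T ![Pi.single a 1, Pi.single i 1] a := Lanti hco _ hia
      have h2 : T ![Pi.single a 1, Pi.single i 1] a = T ![Pi.single i 1, Pi.single a 1] a :=
        congrFun (Lswap hsym _ _) a
      rw [h1, h2, hξ]
      simp [hai, hia]
  · by_cases hai : a = i
    · subst hai
      have hba : b ≠ a := fun h => hab h.symm
      have h2 : T ![Pi.single a 1, Pi.single b 1] a = T ![Pi.single b 1, Pi.single a 1] a :=
        congrFun (Lswap hsym _ _) a
      rw [h2, hξ]
      simp [hab, hba]
    · by_cases hbi : b = i
      · subst hbi
        rw [hξ]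
        simp [hab, hai]
      · have hib : i ≠ b := fun h => hbi h.symm
        have hba : b ≠ a := fun h => hab h.symm
        have e1 : T ![Pi.single a 1, Pi.single b 1] i
            = - T ![Pi.single a 1, Pi.single i 1] b :=
          Lanti hco _ hib
        have e2 : T ![Pi.single a 1, Pi.single i 1] b = T ![Pi.single i 1, Pi.single a 1] b :=
          congrFun (Lswap hsym _ _) b
        have e3 : T ![Pi.single i 1, Pi.single a 1] b
            = - T ![Pi.single i 1, Pi.single b 1] a :=
          Lanti hco _ hba
        have e4 : T ![Pi.single i 1, Pi.single b 1] a = T ![Pi.single b 1, Pi.single i 1] a :=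
          congrFun (Lswap hsym _ _) a
        have e5 : T ![Pi.single b 1, Pi.single i 1] a
            = - T ![Pi.single b 1, Pi.single a 1] i :=
          Lanti hco _ hai
        have e6 : T ![Pi.single b 1, Pi.single a 1] i = T ![Pi.single a 1, Pi.single b 1] i :=
          congrFun (Lswap hsym _ _) i
        rw [e2, e3, e4, e5, e6] at e1
        simp only [hab, hai, hbi, if_false]
        linarith

lemma Lrecon (ξ : (Fin n → ℝ) →ₗ[ℝ] ℝ)
    (hb : ∀ a b i : Fin n, T ![Pi.single a 1, Pi.single b 1] i =
      (if b = i then ξ (Pi.single a 1) else 0) +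
      (if a = i then ξ (Pi.single b 1) else 0) -
      (if a = b then ξ (Pi.single i 1) else 0)) :
    Tmap n ξ = T := by
  apply Module.Basis.ext_multilinear (fun _ => Pi.basisFun ℝ (Fin n))
  intro v
  have hv : (fun i => (Pi.basisFun ℝ (Fin n)) (v i)) = ![Pi.single (v 0) 1, Pi.single (v 1) 1] := by
    funext i
    rcases (by omega : i = 0 ∨ i = 1) with rfl | rfl <;> simp
  rw [hv]
  simp only [Tmap, MultilinearMap.coe_mk]
  funext i
  simp only [Matrix.cons_val_zero, Matrix.cons_val_one, Matrix.head_cons, Pi.add_apply,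
    Pi.sub_apply, Pi.smul_apply, smul_eq_mul]
  rw [hb (v 0) (v 1) i]
  simp only [Pi.single_apply]
  by_cases h01 : v 0 = v 1 <;> by_cases h0i : v 0 = i <;> by_cases h1i : v 1 = i <;>
    simp [h01, h0i, h1i, Finset.sum_ite_eq, eq_comm] <;> split_ifs <;> simp_all <;> try ring

end Recon

noncomputable def Psi (n : ℕ) (i0 : Fin n) :
    MultilinearMap ℝ (fun _ : Fin 2 => (Fin n → ℝ)) (Fin n → ℝ) →ₗ[ℝ] ((Fin n → ℝ) →ₗ[ℝ] ℝ) where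
  toFun T :=
    { toFun := fun u => T ![u, Pi.single i0 1] i0
      map_add' := fun u u' => by
        have h := T.map_update_add ![u, Pi.single i0 1] 0 u u'
        rw [upd0, upd0, upd0] at h
        exact congrFun h i0
      map_smul' := fun c u => by
        have h := T.map_update_smul ![u, Pi.single i0 1] 0 c u
        rw [upd0, upd0] at h
        exact congrFun h i0 }
  map_add' T T' := LinearMap.ext fun u => rfl
  map_smul' c T := LinearMap.ext fun u => rfl

/-- For `n ≥ 1`, the map `ξ ↦ T_ξ`, where
`T_ξ(u,v) = ξ(u) • v + ξ(v) • u − ⟨u,v⟩ • ξ♯`,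
is a linear isomorphism from `(ℝⁿ)*` onto `co(n)^{(1)}`; in particular
`dim co(n)^{(1)} = n`. -/
theorem statement7 (n : ℕ) (hn : 1 ≤ n) :
    (∃ e : ((Fin n → ℝ) →ₗ[ℝ] ℝ) ≃ₗ[ℝ] coProl1 n,
        ∀ (ξ : (Fin n → ℝ) →ₗ[ℝ] ℝ) (u v : Fin n → ℝ),
          (e ξ : MultilinearMap ℝ (fun _ : Fin 2 => (Fin n → ℝ)) (Fin n → ℝ)) ![u, v] =
            ξ u • v + ξ v • u - (∑ i, u i * v i) • (fun j => ξ (Pi.single j 1))) ∧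
      Module.finrank ℝ (coProl1 n) = n := by
  set i0 : Fin n := ⟨0, hn⟩ with hi0
  set Phi : ((Fin n → ℝ) →ₗ[ℝ] ℝ) →ₗ[ℝ] coProl1 n :=
    { toFun := fun ξ => ⟨Tmap n ξ, Tmap_symm n ξ, Tmap_co n ξ⟩
      map_add' := fun ξ ξ' => by
        apply Subtype.ext
        apply MultilinearMap.ext
        intro m
        show ((ξ + ξ') (m 0)) • m 1 + ((ξ + ξ') (m 1)) • m 0 -
            (∑ i, m 0 i * m 1 i) • (fun j => (ξ + ξ') (Pi.single j 1)) = _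
        funext k
        show _ = (Tmap n ξ m + Tmap n ξ' m) k
        simp only [Tmap, MultilinearMap.coe_mk, LinearMap.add_apply, Pi.add_apply,
          Pi.sub_apply, Pi.smul_apply, smul_eq_mul, MultilinearMap.add_apply]
        ring
      map_smul' := fun c ξ => by
        apply Subtype.ext
        apply MultilinearMap.ext
        intro m
        show ((c • ξ) (m 0)) • m 1 + ((c • ξ) (m 1)) • m 0 -
            (∑ i, m 0 i * m 1 i) • (fun j => (c • ξ) (Pi.single j 1)) = _
        funext k
        show _ = (c • Tmap n ξ m) k
        simp only [Tmap, MultilinearMap.coe_mk, LinearMap.smul_apply, Pi.add_apply,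
          Pi.sub_apply, Pi.smul_apply, smul_eq_mul, MultilinearMap.smul_apply]
        ring } with hPhi
  set Psi' : coProl1 n →ₗ[ℝ] ((Fin n → ℝ) →ₗ[ℝ] ℝ) :=
    (Psi n i0).comp (coProl1 n).subtype with hPsi'
  have hPP : ∀ T : coProl1 n, Tmap n (Psi' T) = (T : MultilinearMap ℝ (fun _ : Fin 2 => (Fin n → ℝ)) (Fin n → ℝ)) := by
    intro T
    obtain ⟨hsym, hco⟩ := T.2
    apply Lrecon
    apply Lbasis hsym hco
    intro u i
    exact Ldiag hco u i i0
  have h1 : Phi ∘ₗ Psi' = LinearMap.id := by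
    apply LinearMap.ext
    intro T
    apply Subtype.ext
    exact hPP T
  have h2 : Psi' ∘ₗ Phi = LinearMap.id := by
    apply LinearMap.ext
    intro ξ
    apply LinearMap.ext
    intro u
    show Tmap n ξ ![u, Pi.single i0 1] i0 = ξ u
    show ξ u • (Pi.single i0 1 : Fin n → ℝ) i0 + ξ (Pi.single i0 1) • u i0 -
        (∑ k, u k * (Pi.single i0 1 : Fin n → ℝ) k) • ξ (Pi.single i0 1) = ξ u
    simp only [Pi.single_apply, smul_eq_mul, mul_ite, mul_one, mul_zero, if_true,
      Finset.sum_ite_eq, Finset.sum_ite_eq', Finset.mem_univ]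
    ring
  refine ⟨⟨LinearEquiv.ofLinear Phi Psi' h1 h2, fun ξ u v => rfl⟩, ?_⟩
  have hf : Module.finrank ℝ ((Fin n → ℝ) →ₗ[ℝ] ℝ) = n := by
    rw [Module.finrank_linearMap_self]
    simp
  rw [← LinearEquiv.finrank_eq (LinearEquiv.ofLinear Phi Psi' h1 h2), hf]
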